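/- Let X be a finite type, a : Finset X → ℝ a non-negative monotone set function, n ≥ 1, α ∈ (0,1], and let x₀, …, x_{n−1} be an α-approximate greedy sequence for a with partial sets B_i and output B_n. Let γ ∈ (0,1] be a lower bound on the submodularity ratio γ_{B_n, n}(a). Then for every B* ⊆ X with |B*| = n, a(B_n) ≥ (1 − exp(−α·γ))·a(B*). -/

import Mathlib

open Finset

/-- Marginal gain `Δ_a(x ∣ B) = a(B ∪ {x}) − a(B)`. -/
def margGain {X : Type*} [DecidableEq X] (a : Finset X → ℝ) (x : X) (B : Finset X) : ℝ :=
  a (insert x B) - a B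

/-- The partial set `B_i = {x₀, …, x_{i−1}}` of a sequence `xs`. -/
def partialSet {X : Type*} [DecidableEq X] {n : ℕ} (xs : Fin n → X) (i : ℕ) : Finset X :=
  (Finset.univ.filter (fun j : Fin n => (j : ℕ) < i)).image xs

lemma partialSet_succ {X : Type*} [DecidableEq X] {n : ℕ} (xs : Fin n → X) (i : Fin n) :
    partialSet xs (i + 1) = insert (xs i) (partialSet xs i) := by
  unfold partialSet
  ext y
  simp only [mem_image, mem_filter, mem_univ, true_and, mem_insert, Nat.lt_succ_iff_lt_or_eq]
  constructor
  · rintro ⟨j, hj | hj, rfl⟩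
    · exact Or.inr ⟨j, hj, rfl⟩
    · exact Or.inl (by rw [Fin.ext hj])
  · rintro (rfl | ⟨j, hj, rfl⟩)
    · exact ⟨i, Or.inr rfl, rfl⟩
    · exact ⟨j, Or.inl hj, rfl⟩

lemma partialSet_zero {X : Type*} [DecidableEq X] {n : ℕ} (xs : Fin n → X) :
    partialSet xs 0 = ∅ := by
  unfold partialSet
  simp

lemma partialSet_subset {X : Type*} [DecidableEq X] {n : ℕ} (xs : Fin n → X) {i j : ℕ}
    (h : i ≤ j) : partialSet xs i ⊆ partialSet xs j := by
  apply image_subset_image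
  intro x
  simp only [mem_filter, mem_univ, true_and]
  exact fun hx => lt_of_lt_of_le hx h

lemma a_mono {X : Type*} [DecidableEq X] (a : Finset X → ℝ)
    (ha_mono : ∀ (B : Finset X) (x : X), 0 ≤ margGain a x B)
    {B C : Finset X} (h : B ⊆ C) : a B ≤ a C := by
  have key : ∀ C B : Finset X, a B ≤ a (B ∪ C) := by
    intro C
    induction C using Finset.induction_on with
    | empty => simp
    | @insert x C hx ih =>
      intro B
      have h1 : B ∪ insert x C = insert x (B ∪ C) := by
        ext y; simp [or_comm, or_left_comm]
      rw [h1]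
      have h2 := ha_mono (B ∪ C) x
      unfold margGain at h2
      linarith [ih B]
  have := key C B
  rwa [Finset.union_eq_right.mpr h] at this

/-- approximation guarantee of the α-approximate greedy algorithm
for a non-negative monotone set function with submodularity-ratio lower bound γ:
`a(B_n) ≥ (1 − exp(−α·γ))·a(B*)` for every `n`-subset `B*`. -/
theorem approx_greedy_near_submodular_bound {X : Type*} [Fintype X] [DecidableEq X]
    (a : Finset X → ℝ)
    (ha_nonneg : ∀ B : Finset X, 0 ≤ a B)
    (ha_mono : ∀ (B : Finset X) (x : X), 0 ≤ margGain a x B)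
    (n : ℕ) (hn : 1 ≤ n)
    (α : ℝ) (hα0 : 0 < α) (hα1 : α ≤ 1)
    (xs : Fin n → X)
    (hgreedy : ∀ i : Fin n, ∀ x : X, x ∉ partialSet xs i →
      α * margGain a x (partialSet xs i) ≤ margGain a (xs i) (partialSet xs i))
    (γ : ℝ) (hγ0 : 0 < γ) (hγ1 : γ ≤ 1)
    (hγ : ∀ S : Finset X, S.card ≤ n → ∀ B' ⊆ partialSet xs n \ S,
      γ * (a (B' ∪ S) - a B') ≤ ∑ x ∈ S, margGain a x B')
    (Bstar : Finset X) (hBstar : Bstar.card = n) :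
    (1 - Real.exp (-(α * γ))) * a Bstar ≤ a (partialSet xs n) := by
  have hnR : (0:ℝ) < n := by exact_mod_cast hn
  set c : ℝ := 1 - α * γ / n with hc
  have hc0 : 0 ≤ c := by
    have h1 : α * γ ≤ 1 := by nlinarith
    have h2 : α * γ / n ≤ 1 := by
      rw [div_le_one hnR]
      calc α * γ ≤ 1 := h1
        _ ≤ n := by exact_mod_cast hn
    rw [hc]; linarith
  -- per-step inequality
  have step : ∀ i : Fin n,
      a Bstar - a (partialSet xs (i + 1)) ≤ c * (a Bstar - a (partialSet xs i)) := by
    intro i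
    set B := partialSet xs i with hB
    set S := Bstar \ B with hS
    have hScard : S.card ≤ n := by
      calc S.card ≤ Bstar.card := card_le_card sdiff_subset
        _ = n := hBstar
    have hBsub : B ⊆ partialSet xs n \ S := by
      intro x hx
      rw [mem_sdiff]
      refine ⟨partialSet_subset xs i.isLt.le hx, ?_⟩
      rw [hS, mem_sdiff]
      tauto
    have h1 := hγ S hScard B hBsub
    have hBstar_sub : Bstar ⊆ B ∪ S := by
      intro x hx
      rw [mem_union, hS, mem_sdiff]
      by_cases h : x ∈ B <;> tauto
    have h2 : a Bstar ≤ a (B ∪ S) := a_mono a ha_mono hBstar_sub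
    set g : ℝ := margGain a (xs i) B with hg
    have hg0 : 0 ≤ g := ha_mono B (xs i)
    have h3 : ∑ x ∈ S, margGain a x B ≤ S.card * (g / α) := by
      have := Finset.sum_le_card_nsmul S (fun x => margGain a x B) (g / α) ?_
      · simpa [nsmul_eq_mul] using this
      · intro x hx
        have hxB : x ∉ B := by
          rw [hS, mem_sdiff] at hx; exact hx.2
        have := hgreedy i x hxB
        rw [le_div_iff₀ hα0]
        linarith [this]
    have h4 : (S.card : ℝ) * (g / α) ≤ n * (g / α) := by
      apply mul_le_mul_of_nonneg_right _ (div_nonneg hg0 hα0.le)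
      exact_mod_cast hScard
    have h5 : γ * (a Bstar - a B) ≤ n * (g / α) := by
      calc γ * (a Bstar - a B) ≤ γ * (a (B ∪ S) - a B) := by nlinarith
        _ ≤ ∑ x ∈ S, margGain a x B := h1
        _ ≤ S.card * (g / α) := h3
        _ ≤ n * (g / α) := h4
    -- g = a (partialSet xs (i+1)) - a B
    have hsucc : a (partialSet xs (i + 1)) = a B + g := by
      rw [partialSet_succ xs i, hg]
      unfold margGain
      ring
    rw [hsucc, hc]
    have h6 : α * γ / n * (a Bstar - a B) ≤ g := by
      rw [div_mul_eq_mul_div, div_le_iff₀ hnR]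
      have := mul_le_mul_of_nonneg_left h5 hα0.le
      calc α * γ * (a Bstar - a B) = α * (γ * (a Bstar - a B)) := by ring
        _ ≤ α * (n * (g / α)) := this
        _ = g * n := by field_simp
    nlinarith
  -- iterate
  have key : ∀ i : ℕ, i ≤ n → a Bstar - a (partialSet xs i) ≤ c ^ i * a Bstar := by
    intro i
    induction i with
    | zero => intro _; simpa using ha_nonneg (partialSet xs 0)
    | succ i ih =>
      intro hin
      have hi : i < n := hin
      have h1 := step ⟨i, hi⟩
      simp only [Fin.val_mk] at h1
      have h2 := ih hi.le
      calc a Bstar - a (partialSet xs (i + 1)) ≤ c * (a Bstar - a (partialSet xs i)) := h1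
        _ ≤ c * (c ^ i * a Bstar) := by nlinarith
        _ = c ^ (i + 1) * a Bstar := by ring
  have hfinal := key n le_rfl
  have hexp : c ^ n ≤ Real.exp (-(α * γ)) := by
    have h1 : c ≤ Real.exp (-(α * γ / n)) := by
      have := Real.add_one_le_exp (-(α * γ / n))
      linarith
    calc c ^ n ≤ Real.exp (-(α * γ / n)) ^ n := pow_le_pow_left₀ hc0 h1 n
      _ = Real.exp (n * -(α * γ / n)) := (Real.exp_nat_mul _ n).symm
      _ = Real.exp (-(α * γ)) := by
          congr 1
          field_simp
  have hBstar0 := ha_nonneg Bstar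
  nlinarith [mul_le_mul_of_nonneg_right hexp hBstar0]
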